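/- Under the assumptions: V^{2n} has a positive definite inner product with isometric complex structure J, α : V × V → L^p symmetric bilinear with ⟨α(X,Y),w⟩ = −(X,Y) for a unit time-like w, and the associated β is flat with S(β) degenerate. Let v ∈ U₀ = π₁(S(β)) be a light-like vector with S(β) ∩ S(β)^⊥ = span{v} ⊕ span{v}. Then the plane L = span{v,w} ⊂ L^p is Lorentzian (the induced form on L has signature (1,1)), and choosing v with ⟨v,w⟩ = −1, one has β(X,Y) = β₁(X,Y) + 2((X,Y)v, (X,JY)v) for all X,Y, where β₁ is the composition of β with the orthogonal projection onto L^⊥ ⊕ L^⊥. -/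

import Mathlib

/-- If β is flat with S(β) degenerate and v is the light-like vector of
S(β) ∩ S(β)^⊥ = span{v} ⊕ span{v}, then L₀ = span{v,w} is a Lorentzian plane and,
choosing v with ⟨v,w⟩ = −1, β(X,Y) = β₁(X,Y) + 2((X,Y)v,(X,JY)v) where β₁ is the
component of β in L₀^⊥ ⊕ L₀^⊥. -/
theorem stmt_10 (V L : Type*) [AddCommGroup V] [Module ℝ V] [AddCommGroup L] [Module ℝ L]
    [FiniteDimensional ℝ L]
    (BV : LinearMap.BilinForm ℝ V) (hVsymm : BV.IsSymm)
    (hVpos : ∀ X : V, X ≠ 0 → 0 < BV X X)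
    (J : V →ₗ[ℝ] V) (hJ : J ∘ₗ J = -LinearMap.id)
    (hJiso : ∀ X Y : V, BV (J X) (J Y) = BV X Y)
    (BL : LinearMap.BilinForm ℝ L) (hLsymm : BL.IsSymm)
    (w : L) (hw : BL w w = -1)
    (hLor : ∀ x : L, BL x w = 0 → x ≠ 0 → 0 < BL x x)
    (α : V →ₗ[ℝ] V →ₗ[ℝ] L) (hαsymm : ∀ X Y : V, α X Y = α Y X)
    (hαw : ∀ X Y : V, BL (α X Y) w = -(BV X Y))
    (β : V →ₗ[ℝ] V →ₗ[ℝ] L × L)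
    (hβ : ∀ X Y : V, β X Y = (α X Y + α (J X) (J Y), α X (J Y) - α (J X) Y))
    (Bw : LinearMap.BilinForm ℝ (L × L))
    (hBw : ∀ a b : L × L, Bw a b = BL a.1 b.1 - BL a.2 b.2)
    (hflat : ∀ X Y Z T : V, Bw (β X Y) (β Z T) = Bw (β X T) (β Z Y))
    (Sβ : Submodule ℝ (L × L))
    (hSβ : Sβ = Submodule.span ℝ {z : L × L | ∃ X Y : V, z = β X Y})
    (hdeg : Sβ ⊓ Bw.orthogonal Sβ ≠ ⊥)
    (v : L) (hv0 : v ≠ 0) (hvlight : BL v v = 0)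
    (hvU : v ∈ Submodule.map (LinearMap.fst ℝ L L) Sβ)
    (hvrad : Sβ ⊓ Bw.orthogonal Sβ =
      (Submodule.span ℝ {v}).prod (Submodule.span ℝ {v})) :
    (Module.finrank ℝ ↥(Submodule.span ℝ {v, w}) = 2 ∧
      ∃ a b : L, a ∈ Submodule.span ℝ {v, w} ∧ b ∈ Submodule.span ℝ {v, w} ∧
        BL a a = -1 ∧ BL b b = 1 ∧ BL a b = 0) ∧
    (BL v w = -1 →
      ∃ β₁ : V → V → L × L,
        (∀ X Y : V, (β₁ X Y).1 ∈ BL.orthogonal (Submodule.span ℝ {v, w}) ∧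
          (β₁ X Y).2 ∈ BL.orthogonal (Submodule.span ℝ {v, w})) ∧
        (∀ X Y : V, β X Y = β₁ X Y + ((2 * BV X Y) • v, (2 * BV X (J Y)) • v))) := by

  have hsym : ∀ x y : L, BL x y = BL y x := fun x y => by simpa using hLsymm.eq x y
  have hc : BL v w ≠ 0 := by
    intro h
    have := hLor v h hv0
    rw [hvlight] at this
    exact lt_irrefl 0 this
  have hJ2 : ∀ X : V, J (J X) = -X := by
    intro X
    have := LinearMap.ext_iff.mp hJ X
    simpa using this
  constructor
  · constructor
    · -- finrank = 2
      have hli : LinearIndependent ℝ ![v, w] := by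
        rw [LinearIndependent.pair_iff]
        intro s t hst
        have h1 : BL (s • v + t • w) v = 0 := by rw [hst]; simp
        have h2 : BL (s • v + t • w) w = 0 := by rw [hst]; simp
        simp only [map_add, map_smul, LinearMap.add_apply, LinearMap.smul_apply,
          smul_eq_mul, hvlight, hw, mul_zero, zero_add, hsym w v] at h1 h2
        have ht : t = 0 := by
          rcases mul_eq_zero.mp h1 with h | h
          · exact h
          · exact absurd h hc
        constructor
        · subst ht
          simp only [zero_mul, add_zero] at h2
          rcases mul_eq_zero.mp h2 with h | h
          · exact h
          · exact absurd h hc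
        · exact ht
      have hset : ({v, w} : Set L) = Set.range ![v, w] := by
        ext x
        simp only [Set.mem_insert_iff, Set.mem_singleton_iff, Set.mem_range,
          Fin.exists_fin_two, Matrix.cons_val_zero, Matrix.cons_val_one, Matrix.head_cons]
        tauto
      rw [hset, finrank_span_eq_card hli]
      simp
    · refine ⟨w, (BL v w)⁻¹ • v + w, ?_, ?_, hw, ?_, ?_⟩
      · exact Submodule.subset_span (by simp)
      · exact Submodule.mem_span_pair.mpr ⟨(BL v w)⁻¹, 1, by simp⟩
      · simp only [map_add, map_smul, LinearMap.add_apply, LinearMap.smul_apply,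
          smul_eq_mul, hvlight, hw, hsym w v]
        field_simp
        ring
      · simp only [map_add, map_smul, LinearMap.add_apply, LinearMap.smul_apply,
          smul_eq_mul, hw, hsym w v]
        field_simp
        ring
  · intro hvw
    have hmem : ∀ X Y : V, β X Y ∈ Sβ := by
      intro X Y
      rw [hSβ]
      exact Submodule.subset_span ⟨X, Y, rfl⟩
    have hv1 : ∀ X Y : V, BL (β X Y).1 v = 0 := by
      intro X Y
      have hm : ((v, (0 : L)) : L × L) ∈ Bw.orthogonal Sβ := by
        have : ((v, (0 : L)) : L × L) ∈ Sβ ⊓ Bw.orthogonal Sβ := by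
          rw [hvrad]
          exact ⟨Submodule.mem_span_singleton_self v, Submodule.zero_mem _⟩
        exact this.2
      have := hm _ (hmem X Y)
      rw [hBw] at this
      simpa using this
    have hv2 : ∀ X Y : V, BL (β X Y).2 v = 0 := by
      intro X Y
      have hm : (((0 : L), v) : L × L) ∈ Bw.orthogonal Sβ := by
        have : (((0 : L), v) : L × L) ∈ Sβ ⊓ Bw.orthogonal Sβ := by
          rw [hvrad]
          exact ⟨Submodule.zero_mem _, Submodule.mem_span_singleton_self v⟩
        exact this.2
      have := hm _ (hmem X Y)
      rw [hBw] at this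
      simp only [zero_sub, neg_eq_zero] at this
      simpa using this
    have hw1 : ∀ X Y : V, BL (β X Y).1 w = -(2 * BV X Y) := by
      intro X Y
      rw [hβ]
      simp only [map_add, LinearMap.add_apply, hαw, hJiso]
      ring
    have hw2 : ∀ X Y : V, BL (β X Y).2 w = -(2 * BV X (J Y)) := by
      intro X Y
      rw [hβ]
      have : BV (J X) Y = -(BV X (J Y)) := by
        have := hJiso X (J Y)
        rw [hJ2] at this
        simp only [map_neg, LinearMap.neg_apply] at this
        linarith
      simp only [map_sub, LinearMap.sub_apply, hαw, this]
      ring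
    refine ⟨fun X Y => β X Y - ((2 * BV X Y) • v, (2 * BV X (J Y)) • v), ?_, ?_⟩
    · intro X Y
      constructor
      · intro n hn
        rcases Submodule.mem_span_pair.mp hn with ⟨a, b, rfl⟩
        have e1 : BL v ((β X Y).1 - (2 * BV X Y) • v) = 0 := by
          rw [map_sub, map_smul]
          simp [hsym v (β X Y).1, hv1, hvlight]
        have e2 : BL w ((β X Y).1 - (2 * BV X Y) • v) = 0 := by
          rw [map_sub, map_smul]
          simp only [smul_eq_mul, hsym w (β X Y).1, hw1, hsym w v, hvw]
          ring
        simp only [Prod.fst_sub]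
        rw [map_add, map_smul, map_smul, LinearMap.add_apply, LinearMap.smul_apply,
          LinearMap.smul_apply]
        simp [e1, e2]
      · intro n hn
        rcases Submodule.mem_span_pair.mp hn with ⟨a, b, rfl⟩
        have e1 : BL v ((β X Y).2 - (2 * BV X (J Y)) • v) = 0 := by
          rw [map_sub, map_smul]
          simp [hsym v (β X Y).2, hv2, hvlight]
        have e2 : BL w ((β X Y).2 - (2 * BV X (J Y)) • v) = 0 := by
          rw [map_sub, map_smul]
          simp only [smul_eq_mul, hsym w (β X Y).2, hw2, hsym w v, hvw]
          ring
        simp only [Prod.snd_sub]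
        rw [map_add, map_smul, map_smul, LinearMap.add_apply, LinearMap.smul_apply,
          LinearMap.smul_apply]
        simp [e1, e2]
    · intro X Y
      simp
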